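/- Let f ∈ 𝒮^*(𝒬). Then for every p, q ∈ ℕ there exists a constant c_{p,q} such that |f(x,t)| ≤ c_{p,q} |t|^{2p} (1+|x|²)^{−q} for all x ∈ ℍ and t ∈ Im ℍ. -/

import Mathlib

noncomputable section

open MeasureTheory Quaternion Complex RealInnerProductSpace

/- Measure-theoretic instances for the quaternions. -/
noncomputable instance : MeasurableSpace ℍ[ℝ] := borel _
instance : BorelSpace ℍ[ℝ] := ⟨rfl⟩

/-- The purely imaginary quaternions `Im ℍ ≅ ℝ³`. -/
def ImH : Submodule ℝ ℍ[ℝ] where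
  carrier := {q | q.re = 0}
  add_mem' := by intro a b ha hb; simp_all [Set.mem_setOf_eq]
  zero_mem' := by simp
  smul_mem' := by intro c q hq; simp_all [Set.mem_setOf_eq]

noncomputable instance : MeasurableSpace ↥ImH := borel _
instance : BorelSpace ↥ImH := ⟨rfl⟩

/-- the imaginary part of a quaternion, as an element of `Im ℍ`. -/
def imPart (q : ℍ[ℝ]) : ↥ImH := ⟨q.im, by change q.im.re = 0; simp⟩

/-- The quaternion Heisenberg group `𝒬 = ℍ × Im ℍ` (as a set/measure space). -/
abbrev QH := ℍ[ℝ] × ↥ImH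

/-- Group law of `𝒬` : `(x,t)(x′,t′) = (x + x′, t + t′ − 2 Im( x̄′ x ))`. -/
def Qmul (p q : QH) : QH :=
  (p.1 + q.1, p.2 + q.2 - (2 : ℝ) • imPart (star q.1 * p.1))

/-- Inverse in `𝒬`. -/
def Qinv (p : QH) : QH := (-p.1, -p.2)

lemma sandwich_re (v t : ℍ[ℝ]) (ht : t.re = 0) : (v * t * star v).re = 0 := by
  simp [Quaternion.re_mul, Quaternion.imI_mul, Quaternion.imJ_mul, Quaternion.imK_mul,
    Quaternion.re_star, Quaternion.imI_star, Quaternion.imJ_star, Quaternion.imK_star, ht]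
  ring

/-- `t ↦ v t v̄` as a map of `Im ℍ`. -/
def sandwich (v : ℍ[ℝ]) (t : ↥ImH) : ↥ImH := ⟨v * (t : ℍ[ℝ]) * star v, sandwich_re v t t.2⟩

/-- `Sp(1)`, the unit quaternions. -/
abbrev Sp1 : Type := Metric.sphere (0 : ℍ[ℝ]) 1

lemma Sp1.norm_eq (u : Sp1) : ‖(u : ℍ[ℝ])‖ = 1 := mem_sphere_zero_iff_norm.mp u.2

def sp1Mul (u v : Sp1) : Sp1 :=
  ⟨(u : ℍ[ℝ]) * (v : ℍ[ℝ]), by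
    simp [mem_sphere_zero_iff_norm, norm_mul, Sp1.norm_eq u, Sp1.norm_eq v]⟩

def sp1One : Sp1 := ⟨1, by simp [mem_sphere_zero_iff_norm]⟩

/-- The (two-fold cover of the) affine automorphism group `𝐏` of `𝒬`. -/
abbrev P := ℍ[ℝ] × ↥ImH × {r : ℝ // 0 < r} × Sp1 × Sp1

/-- Group law of `𝐏`. -/
def Pmul (g h : P) : P :=
  ⟨g.1 + Real.sqrt (g.2.2.1 : ℝ) • ((g.2.2.2.1 : ℍ[ℝ]) * h.1 * star (g.2.2.2.2 : ℍ[ℝ])),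
   g.2.1 + (g.2.2.1 : ℝ) • sandwich (g.2.2.2.2 : ℍ[ℝ]) h.2.1
     - (2 * Real.sqrt (g.2.2.1 : ℝ)) •
        imPart ((g.2.2.2.2 : ℍ[ℝ]) * star h.1 * star (g.2.2.2.1 : ℍ[ℝ]) * g.1),
   ⟨(g.2.2.1 : ℝ) * (h.2.2.1 : ℝ), mul_pos g.2.2.1.2 h.2.2.1.2⟩,
   sp1Mul g.2.2.2.1 h.2.2.2.1, sp1Mul g.2.2.2.2 h.2.2.2.2⟩

/-- The identity of `𝐏`. -/
def Pone : P := ⟨0, 0, ⟨1, one_pos⟩, sp1One, sp1One⟩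

/-- The action of `𝐏` on `𝒬`. -/
def Pact (g : P) (p : QH) : QH :=
  ⟨g.1 + Real.sqrt (g.2.2.1 : ℝ) • ((g.2.2.2.1 : ℍ[ℝ]) * p.1 * star (g.2.2.2.2 : ℍ[ℝ])),
   g.2.1 + (g.2.2.1 : ℝ) • sandwich (g.2.2.2.2 : ℍ[ℝ]) p.2
     - (2 * Real.sqrt (g.2.2.1 : ℝ)) •
        imPart ((g.2.2.2.2 : ℍ[ℝ]) * star p.1 * star (g.2.2.2.1 : ℍ[ℝ]) * g.1)⟩

/-- The unitary representation `U` of `𝐏` on `L²(𝒬)`. -/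
def Uop (g : P) (f : QH → ℂ) : QH → ℂ := fun z =>
  (((g.2.2.1 : ℝ) ^ (-(5 : ℝ)/2) : ℝ) : ℂ) *
    f ((Real.sqrt (g.2.2.1 : ℝ))⁻¹ •
          (star (g.2.2.2.1 : ℍ[ℝ]) * (z.1 - g.1) * (g.2.2.2.2 : ℍ[ℝ])),
       ((g.2.2.1 : ℝ))⁻¹ •
          sandwich (star (g.2.2.2.2 : ℍ[ℝ]))
            (z.2 - g.2.1 + (2 : ℝ) • imPart (star z.1 * g.1)))

/-- The continuous wavelet transform `W_φ f (g) = ⟨f, U(g)φ⟩_{L²(𝒬)}`. -/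
def Wav (φ f : QH → ℂ) (g : P) : ℂ :=
  ∫ z : QH, f z * (starRingEnd ℂ) (Uop g φ z)

/-- Group convolution on `𝒬`. -/
def Qconv (f g : QH → ℂ) : QH → ℂ := fun z =>
  ∫ w : QH, f w * g (Qmul (Qinv w) z)

/-- dilation `φ_ρ(x,t) = ρ^{−5} φ(x/√ρ, t/ρ)`. -/
def dilateF (ρ : ℝ) (φ : QH → ℂ) : QH → ℂ := fun z =>
  ((ρ ^ (-5 : ℤ) : ℝ) : ℂ) * φ ((Real.sqrt ρ)⁻¹ • z.1, ρ⁻¹ • z.2)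

/-- rotation `φ_{u,v}(x,t) = φ(ū x v, v̄ t v)`. -/
def rotF (u v : Sp1) (φ : QH → ℂ) : QH → ℂ := fun z =>
  φ (star (u : ℍ[ℝ]) * z.1 * (v : ℍ[ℝ]), sandwich (star (v : ℍ[ℝ])) z.2)

/-- `φ̃(x,t) = conj (φ(−x,−t))`. -/
def tildeF (φ : QH → ℂ) : QH → ℂ := fun z => (starRingEnd ℂ) (φ (-z.1, -z.2))

/-- The Radon transform `ℛf(x,t) = ∫_ℍ f(y, t − 2 Im(ȳ x)) dy`. -/
def Radon (f : QH → ℂ) : QH → ℂ := fun z =>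
  ∫ y : ℍ[ℝ], f (y, z.2 - (2 : ℝ) • imPart (star y * z.1))

/-- Partial Fourier transform in the central variable. -/
def F2 (f : QH → ℂ) : QH → ℂ := fun p =>
  ∫ t : ↥ImH, f (p.1, t) * Complex.exp (Complex.I * ((⟪t, p.2⟫ : ℝ) : ℂ))

/-- Full (Euclidean) Fourier transform on `𝒬 ≅ ℝ⁴ × ℝ³`. -/
def FF (f : QH → ℂ) : QH → ℂ := fun p =>
  ∫ z : QH, f z * Complex.exp (Complex.I * ((⟪z.1, p.1⟫ : ℝ) : ℂ)) *
    Complex.exp (Complex.I * ((⟪z.2, p.2⟫ : ℝ) : ℂ))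

/-- Inverse of the partial Fourier transform `ℱ₂`. -/
def F2inv (f : QH → ℂ) : QH → ℂ := fun z =>
  (((2 * Real.pi) ^ (-3 : ℤ) : ℝ) : ℂ) *
    ∫ a : ↥ImH, f (z.1, a) * Complex.exp (-Complex.I * ((⟪z.2, a⟫ : ℝ) : ℂ))

/-- Inverse of the full Fourier transform `ℱ`. -/
def FFinv (f : QH → ℂ) : QH → ℂ := fun z =>
  (((2 * Real.pi) ^ (-7 : ℤ) : ℝ) : ℂ) *
    ∫ p : QH, f p * Complex.exp (-Complex.I * ((⟪z.1, p.1⟫ : ℝ) : ℂ)) *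
      Complex.exp (-Complex.I * ((⟪z.2, p.2⟫ : ℝ) : ℂ))

/-- The mixing map `Ψ(f)(x,t) = f(−2 x t, t)`. -/
def Psi (f : QH → ℂ) : QH → ℂ := fun z =>
  f ((-2 : ℝ) • (z.1 * (z.2 : ℍ[ℝ])), z.2)

open Classical in
/-- The inverse mixing map. -/
def PsiInv (f : QH → ℂ) : QH → ℂ := fun z =>
  if z.2 = 0 then 0 else
    f ((2 * ‖(z.2 : ℍ[ℝ])‖ ^ 2)⁻¹ • (z.1 * (z.2 : ℍ[ℝ])), z.2)

/-- A function is a Schwartz function. -/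
def IsSchwartz (f : QH → ℂ) : Prop := ∃ g : SchwartzMap QH ℂ, ⇑g = f

/-- The Semyanistyi–Lizorkin space `𝒮^*(𝒬)`: Schwartz functions all of whose
derivatives in the central variable vanish at `t = 0`. -/
def SstarUpper : Set (QH → ℂ) :=
  {f | IsSchwartz f ∧
    ∀ (x : ℍ[ℝ]) (n : ℕ), iteratedFDeriv ℝ n (fun t : ↥ImH => f (x, t)) 0 = 0}

/-- The Semyanistyi–Lizorkin space `𝒮_*(𝒬)`: Schwartz functions all of whose
moments in the central variable vanish. -/
def SstarLower : Set (QH → ℂ) :=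
  {f | IsSchwartz f ∧
    ∀ (x : ℍ[ℝ]) (s : ℕ × ℕ × ℕ),
      ∫ t : ↥ImH, f (x, t) *
        ((((t : ℍ[ℝ]).imI ^ s.1 * (t : ℍ[ℝ]).imJ ^ s.2.1 * (t : ℍ[ℝ]).imK ^ s.2.2 : ℝ)) : ℂ) = 0}

/-- basis vectors of `Im ℍ` -/
def eI : ↥ImH := ⟨⟨0,1,0,0⟩, rfl⟩
def eJ : ↥ImH := ⟨⟨0,0,1,0⟩, rfl⟩
def eK : ↥ImH := ⟨⟨0,0,0,1⟩, rfl⟩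

/-- partial derivative in the central variable along `v ∈ Im ℍ`. -/
def Dt (v : ↥ImH) (f : QH → ℂ) : QH → ℂ := fun z => fderiv ℝ f z (0, v)

/-- `𝓛 = −(1/π²)(∂²/∂t₁² + ∂²/∂t₂² + ∂²/∂t₃²)` acting in the central variable. -/
def Lop (f : QH → ℂ) : QH → ℂ := fun z =>
  -(((Real.pi ^ 2)⁻¹ : ℝ) : ℂ) * (Dt eI (Dt eI f) z + Dt eJ (Dt eJ f) z + Dt eK (Dt eK f) z)


set_option maxHeartbeats 1000000
set_option synthInstance.maxHeartbeats 400000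

open scoped ContDiff in
/-- Iterated Fréchet derivative of a left-shifted function. -/
lemma aux_iteratedFDeriv_shift {E F : Type*} [NormedAddCommGroup E] [NormedSpace ℝ E]
    [NormedAddCommGroup F] [NormedSpace ℝ F] (g : E → F) (hg : ContDiff ℝ ∞ g) (a : E) (n : ℕ) :
    ∀ w, iteratedFDeriv ℝ n (fun z => g (a + z)) w = iteratedFDeriv ℝ n g (a + w) := by
  induction n with
  | zero => intro w; ext m; simp
  | succ n IH =>
    intro w
    have h1 : iteratedFDeriv ℝ n (fun z => g (a + z))
        = fun z => iteratedFDeriv ℝ n g (a + z) := funext IH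
    have hdiff : DifferentiableAt ℝ (iteratedFDeriv ℝ n g) (a + w) :=
      (hg.differentiable_iteratedFDeriv (by exact_mod_cast WithTop.coe_lt_top _)) (a + w)
    have h2 : fderiv ℝ (fun z => iteratedFDeriv ℝ n g (a + z)) w
        = fderiv ℝ (iteratedFDeriv ℝ n g) (a + w) := by
      have hcomp : (fun z => iteratedFDeriv ℝ n g (a + z))
          = (iteratedFDeriv ℝ n g) ∘ (fun z => a + z) := rfl
      rw [hcomp, fderiv_comp w hdiff ((differentiable_id.const_add a) w)]
      have : fderiv ℝ (fun z : E => a + z) w = ContinuousLinearMap.id ℝ E := by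
        rw [fderiv_const_add]; exact fderiv_id
      rw [this, ContinuousLinearMap.comp_id]
    rw [iteratedFDeriv_succ_eq_comp_left, iteratedFDeriv_succ_eq_comp_left]
    simp only [Function.comp_apply]
    congr 1
    rw [h1, h2]

open scoped ContDiff in
/-- Taylor-type bound: a smooth function on `[0,1]` with vanishing derivatives at `0`
up to order `n-1` and `n`-th derivative bounded by `M` satisfies `‖φ s‖ ≤ M s^n / n!`. -/
lemma aux_taylor_bound (M : ℝ) :
    ∀ (n : ℕ) (φ : ℝ → ℂ), ContDiff ℝ ∞ φ →
      (∀ k < n, iteratedDeriv k φ 0 = 0) →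
      (∀ s ∈ Set.Icc (0:ℝ) 1, ‖iteratedDeriv n φ s‖ ≤ M) →
      ∀ s ∈ Set.Icc (0:ℝ) 1, ‖φ s‖ ≤ M * s ^ n / n.factorial := by
  intro n
  induction n with
  | zero => intro φ _ _ hb s hs; simpa using hb s hs
  | succ n IH =>
    intro φ hφ h0 hb s hs
    have hφd : Differentiable ℝ φ := hφ.differentiable (by simp)
    have hφ' : ContDiff ℝ ∞ (deriv φ) := (contDiff_infty_iff_deriv.mp hφ).2
    have h0' : ∀ k < n, iteratedDeriv k (deriv φ) 0 = 0 := by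
      intro k hk
      rw [← iteratedDeriv_succ']
      exact h0 (k + 1) (by omega)
    have hb' : ∀ u ∈ Set.Icc (0:ℝ) 1, ‖iteratedDeriv n (deriv φ) u‖ ≤ M := by
      intro u hu
      rw [← iteratedDeriv_succ']
      exact hb u hu
    have hI := IH (deriv φ) hφ' h0' hb'
    have hz : φ 0 = 0 := by simpa [iteratedDeriv_zero] using h0 0 (Nat.succ_pos n)
    have hcont : Continuous (deriv φ) := hφ'.continuous
    have hftc : φ s - φ 0 = ∫ u in (0:ℝ)..s, deriv φ u :=
      (intervalIntegral.integral_deriv_eq_sub (fun u _ => hφd u)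
        (hcont.intervalIntegrable 0 s)).symm
    have heq : φ s = ∫ u in (0:ℝ)..s, deriv φ u := by rw [← hftc, hz, sub_zero]
    have hbound : ‖∫ u in (0:ℝ)..s, deriv φ u‖ ≤ ∫ u in (0:ℝ)..s, M * u ^ n / n.factorial := by
      refine le_trans (intervalIntegral.norm_integral_le_integral_norm hs.1) ?_
      refine intervalIntegral.integral_mono_on hs.1
        (hcont.norm.intervalIntegrable 0 s)
        (((continuous_const.mul (continuous_pow n)).div_const _).intervalIntegrable 0 s) ?_
      intro u hu
      exact hI u ⟨hu.1, le_trans hu.2 hs.2⟩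
    have hval : (∫ u in (0:ℝ)..s, M * u ^ n / n.factorial)
        = M * s ^ (n+1) / (n+1).factorial := by
      have : (fun u : ℝ => M * u ^ n / n.factorial)
          = fun u : ℝ => (M / n.factorial) * u ^ n := by funext u; ring
      rw [this, intervalIntegral.integral_const_mul, integral_pow]
      have hfac : ((n+1).factorial : ℝ) = ((n:ℝ)+1) * n.factorial := by
        rw [Nat.factorial_succ]; push_cast; ring
      have hn0 : (n.factorial : ℝ) ≠ 0 := Nat.cast_ne_zero.mpr n.factorial_ne_zero
      have hn1 : ((n:ℝ)+1) ≠ 0 := by positivity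
      rw [hfac, zero_pow (Nat.succ_ne_zero n), sub_zero, div_mul_div_comm,
        mul_comm (n.factorial : ℝ) ((n : ℝ) + 1)]
    calc ‖φ s‖ = ‖∫ u in (0:ℝ)..s, deriv φ u‖ := by rw [heq]
      _ ≤ ∫ u in (0:ℝ)..s, M * u ^ n / n.factorial := hbound
      _ = M * s ^ (n+1) / (n+1).factorial := hval

/-- For `f ∈ 𝒮^*(𝒬)` and `p, q ∈ ℕ` there is a constant `c_{p,q}` with
`|f(x,t)| ≤ c_{p,q} |t|^{2p} (1+|x|²)^{−q}`. -/
theorem statement7 (f : QH → ℂ) (hf : f ∈ SstarUpper) (p q : ℕ) :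
    ∃ c : ℝ, ∀ (x : ℍ[ℝ]) (t : ↥ImH),
      ‖f (x, t)‖ ≤ c * ‖t‖ ^ (2 * p) * ((1 + ‖x‖ ^ 2) ^ q)⁻¹ := by
  classical
  obtain ⟨g, hgf⟩ := hf.1
  set C : ℝ := 2 ^ (2*q) *
    ((Finset.Iic ((2*q : ℕ), (2*p : ℕ))).sup (fun m => SchwartzMap.seminorm ℝ m.1 m.2)) g with hC
  have hgsm : ContDiff ℝ (⊤ : ℕ∞) f := by rw [← hgf]; exact g.smooth ⊤
  -- decay bound for the (2p)-th derivative
  have hdecay : ∀ z : QH, ‖iteratedFDeriv ℝ (2*p) f z‖ ≤ C * ((1 + ‖z.1‖ ^ 2) ^ q)⁻¹ := by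
    intro z
    have hpos : (0:ℝ) < (1 + ‖z.1‖ ^ 2) ^ q :=
      pow_pos (by positivity) q
    have base := SchwartzMap.one_add_le_sup_seminorm_apply (𝕜 := ℝ)
      (m := ((2*q : ℕ), (2*p : ℕ))) le_rfl le_rfl g z
    have hxz : (1 + ‖z.1‖ ^ 2) ^ q ≤ (1 + ‖z‖) ^ (2*q) := by
      have h1 : (1 + ‖z.1‖ ^ 2) ^ q ≤ ((1 + ‖z.1‖) ^ 2) ^ q := by
        apply pow_le_pow_left₀ (by positivity)
        nlinarith [norm_nonneg z.1]
      have h2 : ((1 + ‖z.1‖) ^ 2) ^ q ≤ ((1 + ‖z‖) ^ 2) ^ q := by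
        apply pow_le_pow_left₀ (by positivity)
        have := norm_fst_le z
        nlinarith [norm_nonneg z.1, norm_nonneg z]
      calc (1 + ‖z.1‖ ^ 2) ^ q ≤ ((1 + ‖z.1‖) ^ 2) ^ q := h1
        _ ≤ ((1 + ‖z‖) ^ 2) ^ q := h2
        _ = (1 + ‖z‖) ^ (2*q) := by rw [← pow_mul]
    have key : (1 + ‖z.1‖ ^ 2) ^ q * ‖iteratedFDeriv ℝ (2*p) f z‖ ≤ C := by
      calc (1 + ‖z.1‖ ^ 2) ^ q * ‖iteratedFDeriv ℝ (2*p) f z‖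
          ≤ (1 + ‖z‖) ^ (2*q) * ‖iteratedFDeriv ℝ (2*p) f z‖ :=
            mul_le_mul_of_nonneg_right hxz (by positivity)
        _ = (1 + ‖z‖) ^ (2*q) * ‖iteratedFDeriv ℝ (2*p) (⇑g) z‖ := by rw [hgf]
        _ ≤ C := base
    have hfinal : ‖iteratedFDeriv ℝ (2*p) f z‖ ≤ C / (1 + ‖z.1‖ ^ 2) ^ q :=
      (le_div_iff₀' hpos).mpr key
    simpa [div_eq_mul_inv] using hfinal
  refine ⟨C / (2*p).factorial, fun x t => ?_⟩
  -- the one-variable function along the ray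
  set B₀ : ℝ →L[ℝ] ↥ImH := ContinuousLinearMap.toSpanSingleton ℝ t with hB₀
  set B : ℝ →L[ℝ] QH :=
    (ContinuousLinearMap.inr ℝ ℍ[ℝ] ↥ImH).comp B₀ with hB
  set φ : ℝ → ℂ := (fun u : ↥ImH => f (x, u)) ∘ B₀ with hφdef
  have hh : ContDiff ℝ (⊤ : ℕ∞) (fun u : ↥ImH => f (x, u)) :=
    hgsm.comp (contDiff_const.prodMk contDiff_id)
  have hφ : ContDiff ℝ (⊤ : ℕ∞) φ := hh.comp B₀.contDiff
  -- vanishing derivatives at 0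
  have h0 : ∀ k, iteratedDeriv k φ 0 = 0 := by
    intro k
    rw [iteratedDeriv_eq_iteratedFDeriv, hφdef,
      B₀.iteratedFDeriv_comp_right hh 0 (by exact_mod_cast (le_top : ((k:ℕ):ℕ∞) ≤ ⊤))]
    have : iteratedFDeriv ℝ k (fun u : ↥ImH => f (x, u)) (B₀ 0) = 0 := by
      rw [map_zero]; exact hf.2 x k
    rw [this]
    rfl
  -- bound on the 2p-th derivative
  have hBnorm : ‖B‖ ≤ ‖t‖ := by
    apply ContinuousLinearMap.opNorm_le_bound _ (norm_nonneg t)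
    intro s
    have : B s = ((0 : ℍ[ℝ]), s • t) := rfl
    rw [this, Prod.norm_def, norm_zero, norm_smul]
    rw [max_eq_right (by positivity)]
    exact le_of_eq (mul_comm _ _)
  have hgshift : ContDiff ℝ (⊤ : ℕ∞) (fun z : QH => f (((x, (0 : ↥ImH)) : QH) + z)) :=
    hgsm.comp (contDiff_const.add contDiff_id)
  have hφcomp : φ = (fun z : QH => f (((x, (0 : ↥ImH)) : QH) + z)) ∘ B := by
    funext s
    simp only [hφdef, Function.comp_apply]
    congr 1
    have : B s = ((0 : ℍ[ℝ]), s • t) := rfl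
    rw [this, Prod.mk_add_mk, add_zero, zero_add]
    rfl
  set M : ℝ := C * ((1 + ‖x‖ ^ 2) ^ q)⁻¹ * ‖t‖ ^ (2*p) with hM
  have hb : ∀ s ∈ Set.Icc (0:ℝ) 1, ‖iteratedDeriv (2*p) φ s‖ ≤ M := by
    intro s _
    rw [iteratedDeriv_eq_iteratedFDeriv]
    have step1 : ‖iteratedFDeriv ℝ (2*p) φ s (fun _ => (1:ℝ))‖
        ≤ ‖iteratedFDeriv ℝ (2*p) φ s‖ := by
      have := (iteratedFDeriv ℝ (2*p) φ s).le_opNorm (fun _ => (1:ℝ))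
      simpa using this
    refine step1.trans ?_
    rw [hφcomp, B.iteratedFDeriv_comp_right hgshift s (by exact WithTop.coe_le_coe.mpr le_top)]
    have step2 : ‖(iteratedFDeriv ℝ (2*p) (fun z : QH => f (((x, (0 : ↥ImH)) : QH) + z))
          (B s)).compContinuousLinearMap fun _ => B‖
        ≤ ‖iteratedFDeriv ℝ (2*p) (fun z : QH => f (((x, (0 : ↥ImH)) : QH) + z)) (B s)‖
          * ‖t‖ ^ (2*p) := by
      refine (ContinuousMultilinearMap.norm_compContinuousLinearMap_le _ _).trans ?_
      have hprod : (∏ _i : Fin (2*p), ‖B‖) ≤ ‖t‖ ^ (2*p) := by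
        rw [Finset.prod_const, Finset.card_univ, Fintype.card_fin]
        have h2 : @norm (ℝ →L[ℝ] QH) SeminormedAddGroup.toNorm B ≤ ‖t‖ := hBnorm
        exact pow_le_pow_left₀ (norm_nonneg B) h2 _
      exact mul_le_mul_of_nonneg_left hprod (norm_nonneg _)
    refine step2.trans ?_
    have hshift := aux_iteratedFDeriv_shift f (by exact_mod_cast hgsm)
      ((x, (0 : ↥ImH)) : QH) (2*p) (B s)
    rw [hshift]
    have hpt : ((x, (0 : ↥ImH)) : QH) + B s = (x, s • t) := by
      have : B s = ((0 : ℍ[ℝ]), s • t) := rfl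
      rw [this, Prod.mk_add_mk, add_zero, zero_add]
    rw [hpt, hM]
    have := hdecay (x, s • t)
    simp only at this
    exact mul_le_mul_of_nonneg_right this (by positivity)
  have := aux_taylor_bound M (2*p) φ (by exact_mod_cast hφ) (fun k _ => h0 k) hb 1
    ⟨zero_le_one, le_refl 1⟩
  have hφ1 : φ 1 = f (x, t) := by
    simp only [hφdef, Function.comp_apply, hB₀]
    congr 1
    rw [ContinuousLinearMap.toSpanSingleton_apply, one_smul]
  rw [hφ1, one_pow, mul_one] at this
  calc ‖f (x, t)‖ ≤ M / (2*p).factorial := this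
    _ = C / (2*p).factorial * ‖t‖ ^ (2*p) * ((1 + ‖x‖ ^ 2) ^ q)⁻¹ := by
        rw [hM]; ring

end
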